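/- arXiv:1902.03405 — 8 statements merged into one kernel-verified Lean document; each statement's English description precedes it below -/
import Mathlib

section
/- For every natural number n, real coefficients a_0, ..., a_n, and delay parameters q_0 = 1 and 0 < q_i < 1 for i = 1, ..., n, the series Σ_{m=0}^∞ (x^m / m!) (ā; q̄)_m converges absolutely for every real x. -/
/-- The series `Σ_{m=0}^∞ (x^m / m!) (ā; q̄)_m` converges absolutely for every real `x`. -/
theorem statement1 (n : ℕ) (a q : Fin (n + 1) → ℝ)
    (hq0 : q 0 = 1) (hq : ∀ i : Fin (n + 1), i ≠ 0 → 0 < q i ∧ q i < 1)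
    (x : ℝ) :
    Summable (fun m : ℕ =>
      |x ^ m / (Nat.factorial m : ℝ) * ∏ j ∈ Finset.range m, ∑ i, a i * q i ^ j|) := by
  set C : ℝ := ∑ i, |a i| with hC
  have hCnn : 0 ≤ C := Finset.sum_nonneg fun i _ => abs_nonneg _
  have hqle : ∀ i : Fin (n + 1), 0 ≤ q i ∧ q i ≤ 1 := by
    intro i
    by_cases h : i = 0
    · simp [h, hq0]
    · exact ⟨(hq i h).1.le, (hq i h).2.le⟩
  have hfac : ∀ j : ℕ, |∑ i, a i * q i ^ j| ≤ C := by
    intro j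
    calc |∑ i, a i * q i ^ j| ≤ ∑ i, |a i * q i ^ j| := Finset.abs_sum_le_sum_abs _ _
      _ ≤ ∑ i, |a i| := by
          apply Finset.sum_le_sum
          intro i _
          rw [abs_mul]
          calc |a i| * |q i ^ j| ≤ |a i| * 1 := by
                apply mul_le_mul_of_nonneg_left _ (abs_nonneg _)
                rw [abs_pow, abs_of_nonneg (hqle i).1]
                exact pow_le_one₀ (hqle i).1 (hqle i).2
            _ = |a i| := mul_one _
  refine Summable.of_nonneg_of_le (fun m => abs_nonneg _) ?_
    (Real.summable_pow_div_factorial (|x| * C))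
  · intro m
    rw [abs_mul, abs_div, abs_pow, Nat.abs_cast, mul_pow]
    rw [div_mul_eq_mul_div]
    apply div_le_div_of_nonneg_right _ (by positivity)
    calc |x| ^ m * |∏ j ∈ Finset.range m, ∑ i, a i * q i ^ j|
        ≤ |x| ^ m * C ^ m := by
          apply mul_le_mul_of_nonneg_left _ (by positivity)
          rw [Finset.abs_prod]
          calc ∏ j ∈ Finset.range m, |∑ i, a i * q i ^ j|
              ≤ ∏ j ∈ Finset.range m, C :=
                Finset.prod_le_prod (fun j _ => abs_nonneg _) (fun j _ => hfac j)
            _ = C ^ m := by simp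
      _ = _ := rfl
end

section
/- Let n ∈ ℕ, a_0, ..., a_n ∈ ℝ, and q_0 = 1, 0 < q_i < 1 for i = 1, ..., n. Then the function y(x) = R(ā; q̄; x) = Σ_{m=0}^∞ (x^m / m!) (ā; q̄)_m satisfies y(0) = 1 and is differentiable at every real x with y′(x) = Σ_{i=0}^n a_i · y(q_i x); that is, R(ā; q̄; ·) is an exact solution of the multiple proportional delay differential equation y′(x) = Σ_{i=0}^n a_i y(q_i x), y(0) = 1. -/
lemma aux_summable (c : ℕ → ℝ) (A C : ℝ)
    (hcb : ∀ m, |c m| ≤ A * C ^ m) (x : ℝ) :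
    Summable fun m : ℕ => x ^ m / (Nat.factorial m : ℝ) * c m := by
  apply Summable.of_norm_bounded (g := fun m => A * ((|x| * C) ^ m / (Nat.factorial m : ℝ)))
    ((Real.summable_pow_div_factorial _).mul_left A)
  intro m
  have h1 : ‖x ^ m / (Nat.factorial m : ℝ) * c m‖
      = |x| ^ m / (Nat.factorial m : ℝ) * |c m| := by
    simp [abs_mul, abs_div, abs_pow, abs_of_nonneg (Nat.cast_nonneg (Nat.factorial m) : (0:ℝ) ≤ _)]
  rw [h1, mul_pow]
  have h2 : A * (|x| ^ m * C ^ m / (Nat.factorial m : ℝ))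
      = |x| ^ m / (Nat.factorial m : ℝ) * (A * C ^ m) := by ring
  rw [h2]
  exact mul_le_mul_of_nonneg_left (hcb m) (by positivity)

lemma aux_deriv (c : ℕ → ℝ) (C : ℝ)
    (hcb : ∀ m, |c m| ≤ C ^ m) (x : ℝ) :
    HasDerivAt (fun y => ∑' m : ℕ, y ^ m / (Nat.factorial m : ℝ) * c m)
      (∑' m : ℕ, x ^ m / (Nat.factorial m : ℝ) * c (m + 1)) x := by
  set r : ℝ := |x| + 1 with hr
  have hrpos : 0 < r := by positivity
  set f : ℕ → ℝ → ℝ := fun m y => y ^ m / (Nat.factorial m : ℝ) * c m with hf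
  set f' : ℕ → ℝ → ℝ := fun m y => (m : ℝ) * y ^ (m - 1) / (Nat.factorial m : ℝ) * c m with hf'
  set u : ℕ → ℝ := fun m => (m : ℝ) * r ^ (m - 1) / (Nat.factorial m : ℝ) * C ^ m with hu
  have hu_succ : (fun k : ℕ => u (k + 1)) = fun k => C * ((r * C) ^ k / (Nat.factorial k : ℝ)) := by
    funext k
    have hk : ((k + 1 : ℕ) : ℝ) ≠ 0 := by positivity
    have hfac : (0:ℝ) < (Nat.factorial k : ℝ) := by positivity
    simp only [hu, Nat.add_sub_cancel, Nat.factorial_succ, Nat.cast_mul, mul_pow]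
    field_simp
    ring
  have husum : Summable u := by
    rw [← summable_nat_add_iff 1, hu_succ]
    exact ((Real.summable_pow_div_factorial _).mul_left C)
  have hderiv : ∀ (m : ℕ) (y : ℝ), HasDerivAt (f m) (f' m y) y := by
    intro m y
    exact ((hasDerivAt_pow m y).div_const _).mul_const _
  have hbound : ∀ (m : ℕ) (y : ℝ), y ∈ Metric.ball (0:ℝ) r → ‖f' m y‖ ≤ u m := by
    intro m y hy
    have hyr : |y| ≤ r := by
      have := mem_ball_zero_iff.mp hy
      simpa [Real.norm_eq_abs] using this.le
    have h1 : ‖f' m y‖ = (m : ℝ) * |y| ^ (m - 1) / (Nat.factorial m : ℝ) * |c m| := by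
      simp [hf', abs_mul, abs_div, abs_pow,
        abs_of_nonneg (Nat.cast_nonneg (Nat.factorial m) : (0:ℝ) ≤ _),
        abs_of_nonneg (Nat.cast_nonneg m : (0:ℝ) ≤ _)]
    rw [h1, hu]
    have hpow : |y| ^ (m - 1) ≤ r ^ (m - 1) := pow_le_pow_left₀ (abs_nonneg y) hyr _
    have hfst : (m : ℝ) * |y| ^ (m - 1) / (Nat.factorial m : ℝ)
        ≤ (m : ℝ) * r ^ (m - 1) / (Nat.factorial m : ℝ) := by
      apply div_le_div_of_nonneg_right ?_ (by positivity)
      exact mul_le_mul_of_nonneg_left hpow (Nat.cast_nonneg m)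
    exact mul_le_mul hfst (hcb m) (abs_nonneg _) (by positivity)
  have hsumx : Summable fun m => f m x := by
    apply aux_summable c 1 C
    intro m; simpa using hcb m
  have hxmem : x ∈ Metric.ball (0:ℝ) r := by
    rw [Metric.mem_ball, dist_zero_right, Real.norm_eq_abs, hr]; linarith
  have main := hasDerivAt_tsum_of_isPreconnected husum Metric.isOpen_ball
    (convex_ball (0:ℝ) r).isPreconnected (fun m y _ => hderiv m y) hbound
    hxmem hsumx hxmem
  have hsum' : Summable fun m => f' m x := by
    rw [← summable_nat_add_iff 1]
    have heq : (fun m : ℕ => f' (m + 1) x)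
        = fun m : ℕ => x ^ m / (Nat.factorial m : ℝ) * c (m + 1) := by
      funext m
      have hfac : (0:ℝ) < (Nat.factorial m : ℝ) := by positivity
      simp only [hf', Nat.add_sub_cancel, Nat.factorial_succ, Nat.cast_mul, Nat.cast_add,
        Nat.cast_one]
      field_simp
    rw [heq]
    apply aux_summable (fun m => c (m + 1)) C C
    intro m
    calc |c (m + 1)| ≤ C ^ (m + 1) := hcb _
    _ = C * C ^ m := by ring
  have htsum : ∑' m, f' m x = ∑' m : ℕ, x ^ m / (Nat.factorial m : ℝ) * c (m + 1) := by
    rw [Summable.tsum_eq_zero_add hsum']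
    have h0 : f' 0 x = 0 := by simp [hf']
    rw [h0, zero_add]
    congr 1
    funext m
    have hfac : (0:ℝ) < (Nat.factorial m : ℝ) := by positivity
    simp only [hf', Nat.add_sub_cancel, Nat.factorial_succ, Nat.cast_mul, Nat.cast_add,
      Nat.cast_one]
    field_simp
  rw [htsum] at main
  exact main

/-- `y(x) = R(ā; q̄; x)` satisfies `y(0) = 1` and solves the multiple proportional delay
differential equation `y'(x) = Σ_{i=0}^n a_i y(q_i x)` at every real `x`. -/
theorem statement3 (n : ℕ) (a q : Fin (n + 1) → ℝ)
    (hq0 : q 0 = 1) (hq : ∀ i : Fin (n + 1), i ≠ 0 → 0 < q i ∧ q i < 1)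
    (R : ℝ → ℝ)
    (hR : ∀ x : ℝ, R x = ∑' m : ℕ,
      x ^ m / (Nat.factorial m : ℝ) * ∏ j ∈ Finset.range m, ∑ i, a i * q i ^ j) :
    R 0 = 1 ∧ ∀ x : ℝ, HasDerivAt R (∑ i, a i * R (q i * x)) x := by
  have hqpos : ∀ i, 0 < q i ∧ q i ≤ 1 := by
    intro i
    by_cases h : i = 0
    · rw [h, hq0]; exact ⟨one_pos, le_refl 1⟩
    · exact ⟨(hq i h).1, (hq i h).2.le⟩
  set S : ℕ → ℝ := fun j => ∑ i, a i * q i ^ j with hSdef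
  set c : ℕ → ℝ := fun m => ∏ j ∈ Finset.range m, S j with hcdef
  set C : ℝ := ∑ i, |a i| with hCdef
  have hCnn : 0 ≤ C := Finset.sum_nonneg fun i _ => abs_nonneg _
  have hSb : ∀ j, |S j| ≤ C := by
    intro j
    calc |S j| ≤ ∑ i, |a i * q i ^ j| := Finset.abs_sum_le_sum_abs _ _
    _ ≤ ∑ i, |a i| := by
        apply Finset.sum_le_sum
        intro i _
        rw [abs_mul]
        have h1 : |q i ^ j| ≤ 1 := by
          rw [abs_pow, abs_of_pos (hqpos i).1]
          exact pow_le_one₀ (hqpos i).1.le (hqpos i).2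
        nlinarith [abs_nonneg (a i)]
  have hcb : ∀ m, |c m| ≤ C ^ m := by
    intro m
    calc |c m| = ∏ j ∈ Finset.range m, |S j| := Finset.abs_prod _ _
    _ ≤ ∏ j ∈ Finset.range m, C :=
        Finset.prod_le_prod (fun _ _ => abs_nonneg _) (fun j _ => hSb j)
    _ = C ^ m := by simp
  have hReq : ∀ x : ℝ, R x = ∑' m : ℕ, x ^ m / (Nat.factorial m : ℝ) * c m := hR
  constructor
  · rw [hReq 0]
    rw [tsum_eq_single 0 (by intro m hm; simp [zero_pow hm])]
    simp [hcdef]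
  · intro x
    have hderiv := aux_deriv c C hcb x
    have hfun : (fun y => ∑' m : ℕ, y ^ m / (Nat.factorial m : ℝ) * c m) = R := by
      funext y; rw [hReq y]
    rw [hfun] at hderiv
    have hval : (∑' m : ℕ, x ^ m / (Nat.factorial m : ℝ) * c (m + 1))
        = ∑ i, a i * R (q i * x) := by
      have hterm : ∀ m : ℕ, x ^ m / (Nat.factorial m : ℝ) * c (m + 1)
          = ∑ i, a i * ((q i * x) ^ m / (Nat.factorial m : ℝ) * c m) := by
        intro m
        have hc1 : c (m + 1) = c m * S m := by
          simp [hcdef, Finset.prod_range_succ]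
        rw [hc1, hSdef]
        rw [Finset.mul_sum, Finset.mul_sum]
        apply Finset.sum_congr rfl
        intro i _
        rw [mul_pow]
        ring
      rw [tsum_congr hterm]
      rw [Summable.tsum_finsetSum (by
        intro i _
        exact ((aux_summable c 1 C (by intro m; simpa using hcb m) (q i * x)).mul_left
          (a i)))]
      apply Finset.sum_congr rfl
      intro i _
      rw [tsum_mul_left, hReq (q i * x)]
    rw [hval] at hderiv
    exact hderiv
end

section
/- (Addition Theorem) Let n ∈ ℕ, a_0, ..., a_n ∈ ℝ, q_0 = 1 and 0 < q_i < 1 for i = 1, ..., n. Then for all real x and y, R(ā; q̄; x + y) = Σ_{r=0}^∞ (x^r / r!) · R^{(r)}(ā; q̄; y), where R^{(r)}(ā; q̄; y) = Σ_{m=r}^∞ (y^{m−r} / (m−r)!) (ā; q̄)_m is the r-th derivative of R(ā; q̄; ·) at y, and the series over r converges. -/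
open Finset

lemma aux_c_bound (C : ℝ) (hC : 0 ≤ C) (S : ℕ → ℝ) (hS : ∀ j, |S j| ≤ C) (m : ℕ) :
    |∏ j ∈ Finset.range m, S j| ≤ C ^ m := by
  induction m with
  | zero => simp
  | succ m ih =>
    rw [Finset.prod_range_succ, pow_succ, abs_mul]
    exact mul_le_mul ih (hS m) (abs_nonneg _) (pow_nonneg hC m)

lemma aux_binom (x y : ℝ) (k : ℕ) :
    ∑ p ∈ Finset.HasAntidiagonal.antidiagonal k,
      x ^ p.1 / (Nat.factorial p.1 : ℝ) * (y ^ p.2 / (Nat.factorial p.2 : ℝ)) =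
      (x + y) ^ k / (Nat.factorial k : ℝ) := by
  rw [add_pow, Finset.sum_div, Finset.Nat.sum_antidiagonal_eq_sum_range_succ_mk]
  refine Finset.sum_congr rfl fun m hm => ?_
  rw [Finset.mem_range, Nat.lt_succ_iff] at hm
  have h := Nat.choose_mul_factorial_mul_factorial hm
  have h1 : (Nat.factorial m : ℝ) ≠ 0 := Nat.cast_ne_zero.2 (Nat.factorial_ne_zero m)
  have h2 : (Nat.factorial (k - m) : ℝ) ≠ 0 := Nat.cast_ne_zero.2 (Nat.factorial_ne_zero _)
  have h3 : (Nat.factorial k : ℝ) ≠ 0 := Nat.cast_ne_zero.2 (Nat.factorial_ne_zero k)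
  have h' : ((k.choose m : ℝ)) * (Nat.factorial m : ℝ) * (Nat.factorial (k - m) : ℝ)
      = (Nat.factorial k : ℝ) := by exact_mod_cast congrArg (Nat.cast : ℕ → ℝ) h
  field_simp
  linear_combination (-(x ^ m * y ^ (k - m))) * h' 

set_option maxHeartbeats 1000000 in
/-- Addition theorem: `R(ā; q̄; x + y) = Σ_{r=0}^∞ (x^r / r!) R^{(r)}(ā; q̄; y)`, where
`R^{(r)}(ā; q̄; y) = Σ_{m=r}^∞ (y^{m-r}/(m-r)!) (ā; q̄)_m` (reindexed as
`Σ_{m=0}^∞ (y^m/m!) (ā; q̄)_{m+r}`), and the series over `r` converges. -/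
theorem statement5 (n : ℕ) (a q : Fin (n + 1) → ℝ)
    (hq0 : q 0 = 1) (hq : ∀ i : Fin (n + 1), i ≠ 0 → 0 < q i ∧ q i < 1)
    (x y : ℝ) :
    Summable (fun r : ℕ => x ^ r / (Nat.factorial r : ℝ) *
        ∑' m : ℕ,
          y ^ m / (Nat.factorial m : ℝ) * ∏ j ∈ Finset.range (m + r), ∑ i, a i * q i ^ j) ∧
    (∑' m : ℕ,
        (x + y) ^ m / (Nat.factorial m : ℝ) * ∏ j ∈ Finset.range m, ∑ i, a i * q i ^ j) =
      ∑' r : ℕ, x ^ r / (Nat.factorial r : ℝ) *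
        ∑' m : ℕ,
          y ^ m / (Nat.factorial m : ℝ) * ∏ j ∈ Finset.range (m + r), ∑ i, a i * q i ^ j := by
  set S : ℕ → ℝ := fun j => ∑ i, a i * q i ^ j with hSdef
  set c : ℕ → ℝ := fun m => ∏ j ∈ Finset.range m, S j with hcdef
  set C : ℝ := ∑ i, |a i| with hCdef
  have hC0 : 0 ≤ C := Finset.sum_nonneg fun i _ => abs_nonneg _
  have hq01 : ∀ i : Fin (n + 1), 0 ≤ q i ∧ q i ≤ 1 := by
    intro i
    by_cases hi : i = 0
    · simp [hi, hq0]
    · exact ⟨(hq i hi).1.le, (hq i hi).2.le⟩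
  have hSb : ∀ j, |S j| ≤ C := by
    intro j
    calc |S j| ≤ ∑ i, |a i * q i ^ j| := Finset.abs_sum_le_sum_abs _ _
      _ ≤ C := by
        refine Finset.sum_le_sum fun i _ => ?_
        rw [abs_mul]
        have h1 : |q i ^ j| ≤ 1 := by
          rw [abs_pow]
          exact pow_le_one₀ (abs_nonneg _) (abs_le.2 ⟨by linarith [(hq01 i).1], (hq01 i).2⟩)
        nlinarith [abs_nonneg (a i)]
  have hcb : ∀ m, |c m| ≤ C ^ m := aux_c_bound C hC0 S hSb
  -- The double-indexed family
  set F : ℕ × ℕ → ℝ := fun p =>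
    x ^ p.1 / (Nat.factorial p.1 : ℝ) * (y ^ p.2 / (Nat.factorial p.2 : ℝ) * c (p.2 + p.1))
    with hFdef
  have hg : Summable (fun p : ℕ × ℕ =>
      (|x| * C) ^ p.1 / (Nat.factorial p.1 : ℝ) *
        ((|y| * C) ^ p.2 / (Nat.factorial p.2 : ℝ))) :=
    (Real.summable_pow_div_factorial _).mul_of_nonneg (Real.summable_pow_div_factorial _)
      (fun r => div_nonneg (pow_nonneg (by positivity) _) (by positivity))
      (fun m => div_nonneg (pow_nonneg (by positivity) _) (by positivity))
  have hF : Summable F := by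
    refine hg.of_norm_bounded fun p => ?_
    have h1 : (0:ℝ) < Nat.factorial p.1 := by exact_mod_cast Nat.factorial_pos p.1
    have h2 : (0:ℝ) < Nat.factorial p.2 := by exact_mod_cast Nat.factorial_pos p.2
    have : ‖F p‖ = |x| ^ p.1 / (Nat.factorial p.1 : ℝ) *
        (|y| ^ p.2 / (Nat.factorial p.2 : ℝ) * |c (p.2 + p.1)|) := by
      simp [hFdef, abs_mul, abs_div, abs_pow, abs_of_pos h1, abs_of_pos h2, Real.norm_eq_abs]
    rw [this, mul_pow, mul_pow]
    have hc' : |c (p.2 + p.1)| ≤ C ^ p.2 * C ^ p.1 := by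
      rw [← pow_add]; exact hcb _
    have hx : 0 ≤ |x| ^ p.1 / (Nat.factorial p.1 : ℝ) := by positivity
    have hy : 0 ≤ |y| ^ p.2 / (Nat.factorial p.2 : ℝ) := by positivity
    calc |x| ^ p.1 / (Nat.factorial p.1 : ℝ) *
        (|y| ^ p.2 / (Nat.factorial p.2 : ℝ) * |c (p.2 + p.1)|)
        ≤ |x| ^ p.1 / (Nat.factorial p.1 : ℝ) *
          (|y| ^ p.2 / (Nat.factorial p.2 : ℝ) * (C ^ p.2 * C ^ p.1)) := by
          refine mul_le_mul_of_nonneg_left (mul_le_mul_of_nonneg_left hc' hy) hx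
      _ = |x| ^ p.1 * C ^ p.1 / (Nat.factorial p.1 : ℝ) *
          (|y| ^ p.2 * C ^ p.2 / (Nat.factorial p.2 : ℝ)) := by ring
  have hInner : ∀ r, Summable fun m => F (r, m) := fun r => hF.prod_factor r
  have hOuter : HasSum (fun r => ∑' m, F (r, m)) (∑' p, F p) :=
    hF.hasSum.prod_fiberwise fun r => (hInner r).hasSum
  have hkey : ∀ r : ℕ, (∑' m, F (r, m)) = x ^ r / (Nat.factorial r : ℝ) *
      ∑' m : ℕ, y ^ m / (Nat.factorial m : ℝ) * ∏ j ∈ Finset.range (m + r), S j := by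
    intro r
    rw [← tsum_mul_left]
  constructor
  · refine Summable.congr hOuter.summable fun r => hkey r
  · have e1 : (∑' p, F p) = ∑' σ : Σ k : ℕ, Finset.HasAntidiagonal.antidiagonal k, F (σ.2 : ℕ × ℕ) := by
      rw [← Finset.HasAntidiagonal.sigmaAntidiagonalEquivProd.tsum_eq F]
      rfl
    have hFe : Summable fun σ : Σ k : ℕ, Finset.HasAntidiagonal.antidiagonal k => F (σ.2 : ℕ × ℕ) := by
      rw [← Finset.HasAntidiagonal.sigmaAntidiagonalEquivProd.summable_iff] at hF
      exact hF
    have e2 : (∑' σ : Σ k : ℕ, Finset.HasAntidiagonal.antidiagonal k, F (σ.2 : ℕ × ℕ)) =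
        ∑' k : ℕ, ∑' p : Finset.HasAntidiagonal.antidiagonal k, F (p : ℕ × ℕ) :=
      Summable.tsum_sigma' (fun k => hFe.sigma_factor k) hFe
    have e3 : ∀ k : ℕ, (∑' p : Finset.HasAntidiagonal.antidiagonal k, F (p : ℕ × ℕ)) =
        (x + y) ^ k / (Nat.factorial k : ℝ) * c k := by
      intro k
      rw [Finset.tsum_subtype]
      have : ∀ p ∈ Finset.HasAntidiagonal.antidiagonal k, F p =
          x ^ p.1 / (Nat.factorial p.1 : ℝ) * (y ^ p.2 / (Nat.factorial p.2 : ℝ)) * c k := by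
        intro p hp
        rw [Finset.HasAntidiagonal.mem_antidiagonal] at hp
        simp only [hFdef]
        rw [show p.2 + p.1 = k by omega]
        ring
      rw [Finset.sum_congr rfl this, ← Finset.sum_mul, aux_binom]
    have goalL : (∑' m : ℕ, (x + y) ^ m / (Nat.factorial m : ℝ) *
        ∏ j ∈ Finset.range m, S j) = ∑' p, F p := by
      rw [e1, e2]
      exact tsum_congr fun k => (e3 k).symm
    rw [goalL, ← hOuter.tsum_eq]
    exact tsum_congr fun r => hkey r
end

section
/- Let n ∈ ℕ, q_0 = 1, 0 < q_i < 1 for i = 1, ..., n, and a_i ≥ 0 for i = 0, 1, ..., n. Then for all x with 0 ≤ x < ∞, the two-sided bound e^{a_0 x} ≤ R(ā; q̄; x) ≤ e^{(Σ_{i=0}^n a_i) x} holds. -/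
open scoped Nat

lemma real_exp_eq_tsum (y : ℝ) : Real.exp y = ∑' m : ℕ, y ^ m / m ! := by
  rw [Real.exp_eq_exp_ℝ, NormedSpace.exp_eq_tsum_div]

/-- For nonnegative coefficients `a_i ≥ 0`, the function `R(ā; q̄; x)` satisfies the
two-sided bound `e^{a_0 x} ≤ R(ā; q̄; x) ≤ e^{(Σ_{i=0}^n a_i) x}` for all `0 ≤ x < ∞`. -/
theorem statement7 (n : ℕ) (a q : Fin (n + 1) → ℝ)
    (hq0 : q 0 = 1) (hq : ∀ i : Fin (n + 1), i ≠ 0 → 0 < q i ∧ q i < 1)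
    (ha : ∀ i : Fin (n + 1), 0 ≤ a i)
    (x : ℝ) (hx : 0 ≤ x) :
    Real.exp (a 0 * x) ≤
        (∑' m : ℕ,
          x ^ m / (Nat.factorial m : ℝ) * ∏ j ∈ Finset.range m, ∑ i, a i * q i ^ j) ∧
      (∑' m : ℕ,
          x ^ m / (Nat.factorial m : ℝ) * ∏ j ∈ Finset.range m, ∑ i, a i * q i ^ j) ≤
        Real.exp ((∑ i, a i) * x) := by
  set S : ℝ := ∑ i, a i with hS
  have hqnn : ∀ (i : Fin (n + 1)) (j : ℕ), 0 ≤ q i ^ j ∧ q i ^ j ≤ 1 := by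
    intro i j
    by_cases h : i = 0
    · simp [h, hq0]
    · exact ⟨pow_nonneg (hq i h).1.le j, pow_le_one₀ (hq i h).1.le (hq i h).2.le⟩
  have hlow : ∀ j : ℕ, a 0 ≤ ∑ i, a i * q i ^ j := by
    intro j
    calc a 0 = a 0 * q 0 ^ j := by simp [hq0]
    _ ≤ ∑ i, a i * q i ^ j :=
      Finset.single_le_sum (fun i _ => mul_nonneg (ha i) (hqnn i j).1) (Finset.mem_univ 0)
  have hhigh : ∀ j : ℕ, ∑ i, a i * q i ^ j ≤ S := by
    intro j
    apply Finset.sum_le_sum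
    intro i _
    nlinarith [ha i, (hqnn i j).1, (hqnn i j).2]
  have ha0nn : (0:ℝ) ≤ a 0 := ha 0
  have hSnn : 0 ≤ S := Finset.sum_nonneg fun i _ => ha i
  have hPlow : ∀ m : ℕ, a 0 ^ m ≤ ∏ j ∈ Finset.range m, ∑ i, a i * q i ^ j := by
    intro m
    calc a 0 ^ m = ∏ _j ∈ Finset.range m, a 0 := by simp
    _ ≤ _ := Finset.prod_le_prod (fun j _ => ha0nn) fun j _ => hlow j
  have hPhigh : ∀ m : ℕ, ∏ j ∈ Finset.range m, ∑ i, a i * q i ^ j ≤ S ^ m := by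
    intro m
    calc ∏ j ∈ Finset.range m, ∑ i, a i * q i ^ j
        ≤ ∏ _j ∈ Finset.range m, S :=
          Finset.prod_le_prod (fun j _ => le_trans ha0nn (hlow j)) fun j _ => hhigh j
    _ = S ^ m := by simp
  have hPnn : ∀ m : ℕ, 0 ≤ ∏ j ∈ Finset.range m, ∑ i, a i * q i ^ j := fun m =>
    Finset.prod_nonneg fun j _ => le_trans ha0nn (hlow j)
  have hxm : ∀ m : ℕ, (0:ℝ) ≤ x ^ m / m ! := fun m =>
    div_nonneg (pow_nonneg hx m) (Nat.cast_nonneg _)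
  have hsumS : Summable (fun m : ℕ => (S * x) ^ m / m !) := Real.summable_pow_div_factorial _
  have hsuma : Summable (fun m : ℕ => (a 0 * x) ^ m / m !) := Real.summable_pow_div_factorial _
  have key : ∀ m : ℕ,
      (a 0 * x) ^ m / m ! ≤ x ^ m / m ! * ∏ j ∈ Finset.range m, ∑ i, a i * q i ^ j ∧
      x ^ m / m ! * ∏ j ∈ Finset.range m, ∑ i, a i * q i ^ j ≤ (S * x) ^ m / m ! := by
    intro m
    constructor
    · calc (a 0 * x) ^ m / (m ! : ℝ) = x ^ m / m ! * a 0 ^ m := by rw [mul_pow]; ring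
      _ ≤ _ := mul_le_mul_of_nonneg_left (hPlow m) (hxm m)
    · calc x ^ m / (m ! : ℝ) * ∏ j ∈ Finset.range m, ∑ i, a i * q i ^ j
          ≤ x ^ m / m ! * S ^ m := mul_le_mul_of_nonneg_left (hPhigh m) (hxm m)
      _ = (S * x) ^ m / m ! := by rw [mul_pow]; ring
  have hsum : Summable (fun m : ℕ =>
      x ^ m / (m ! : ℝ) * ∏ j ∈ Finset.range m, ∑ i, a i * q i ^ j) := by
    apply Summable.of_nonneg_of_le (fun m => mul_nonneg (hxm m) (hPnn m))
      (fun m => (key m).2) hsumS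
  constructor
  · rw [real_exp_eq_tsum]
    exact Summable.tsum_le_tsum (fun m => (key m).1) hsuma hsum
  · rw [real_exp_eq_tsum]
    exact Summable.tsum_le_tsum (fun m => (key m).2) hsum hsumS
end

section
/- Let n ∈ ℕ, b > 0, and let f be a continuous real-valued function of (x, y_0, ..., y_n) ∈ [0, b] × ℝ^{n+1} satisfying the Lipschitz condition |f(x, y_0, ..., y_n) − f(x, u_0, ..., u_n)| ≤ Σ_{i=0}^n L_i |y_i − u_i| with each L_i ≥ 0. Let q_0 = 1 and 0 < q_i < 1 for i = 1, ..., n. If y and z are continuous functions on [0, b] both satisfying the integral equation w(x) = 1 + ∫_0^x f(t, w(q_0 t), w(q_1 t), ..., w(q_n t)) dt for all x ∈ [0, b], then y = z on [0, b]. -/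
open MeasureTheory

/-- Uniqueness: if `f` is continuous on `[0,b] × ℝ^{n+1}` and Lipschitz in the state
variables with constants `L_i ≥ 0`, then any two continuous solutions on `[0,b]` of the
integral equation `w(x) = 1 + ∫_0^x f(t, w(q_0 t), …, w(q_n t)) dt` coincide on `[0,b]`. -/
theorem statement11 (n : ℕ) (b : ℝ) (hb : 0 < b)
    (L : Fin (n + 1) → ℝ) (hL : ∀ i, 0 ≤ L i)
    (f : ℝ → (Fin (n + 1) → ℝ) → ℝ)
    (hf : ContinuousOn (fun p : ℝ × (Fin (n + 1) → ℝ) => f p.1 p.2)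
      (Set.Icc 0 b ×ˢ Set.univ))
    (hLip : ∀ x : ℝ, ∀ u v : Fin (n + 1) → ℝ,
      |f x u - f x v| ≤ ∑ i, L i * |u i - v i|)
    (q : Fin (n + 1) → ℝ) (hq0 : q 0 = 1)
    (hq : ∀ i : Fin (n + 1), i ≠ 0 → 0 < q i ∧ q i < 1)
    (y z : ℝ → ℝ)
    (hyc : ContinuousOn y (Set.Icc 0 b)) (hzc : ContinuousOn z (Set.Icc 0 b))
    (hy : ∀ x ∈ Set.Icc (0 : ℝ) b,
      y x = 1 + ∫ t in (0 : ℝ)..x, f t (fun i => y (q i * t)))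
    (hz : ∀ x ∈ Set.Icc (0 : ℝ) b,
      z x = 1 + ∫ t in (0 : ℝ)..x, f t (fun i => z (q i * t))) :
    ∀ x ∈ Set.Icc (0 : ℝ) b, y x = z x := by
  have hq' : ∀ i, 0 < q i ∧ q i ≤ 1 := by
    intro i
    by_cases h : i = 0
    · subst h; rw [hq0]; exact ⟨one_pos, le_refl 1⟩
    · exact ⟨(hq i h).1, (hq i h).2.le⟩
  have hmaps : ∀ i, ∀ t ∈ Set.Icc (0 : ℝ) b, q i * t ∈ Set.Icc (0 : ℝ) b := by
    intro i t ht
    constructor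
    · exact mul_nonneg (hq' i).1.le ht.1
    · nlinarith [(hq' i).2, ht.1, ht.2, (hq' i).1]
  -- continuity of the integrands
  have hcont : ∀ w : ℝ → ℝ, ContinuousOn w (Set.Icc 0 b) →
      ContinuousOn (fun t => f t (fun i => w (q i * t))) (Set.Icc (0 : ℝ) b) := by
    intro w hw
    have h1 : ContinuousOn (fun t : ℝ => ((t, fun i => w (q i * t)) :
        ℝ × (Fin (n + 1) → ℝ))) (Set.Icc (0 : ℝ) b) := by
      apply ContinuousOn.prodMk continuousOn_id
      apply continuousOn_pi.2
      intro i
      exact hw.comp (continuous_mul_left (q i)).continuousOn (hmaps i)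
    exact hf.comp h1 (fun t ht => ⟨ht, Set.mem_univ _⟩)
  -- a uniform bound on |y - z|
  obtain ⟨C, hC0, hC⟩ : ∃ C, 0 ≤ C ∧ ∀ t ∈ Set.Icc (0 : ℝ) b, |y t - z t| ≤ C := by
    obtain ⟨t0, ht0, hmax⟩ := isCompact_Icc.exists_isMaxOn
      ⟨0, by simp [hb.le]⟩ ((hyc.sub hzc).abs)
    exact ⟨|y t0 - z t0|, abs_nonneg _, fun t ht => hmax ht⟩
  set S : ℝ := ∑ i, L i with hSdef
  have hS0 : 0 ≤ S := Finset.sum_nonneg fun i _ => hL i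
  -- integrability of the integrands over subintervals
  have hInt : ∀ w : ℝ → ℝ, ContinuousOn w (Set.Icc 0 b) → ∀ x ∈ Set.Icc (0 : ℝ) b,
      IntervalIntegrable (fun t => f t (fun i => w (q i * t))) volume 0 x := by
    intro w hw x hx
    apply ContinuousOn.intervalIntegrable
    rw [Set.uIcc_of_le hx.1]
    exact (hcont w hw).mono (Set.Icc_subset_Icc le_rfl hx.2)
  -- main estimate by induction
  have key : ∀ k : ℕ, ∀ x ∈ Set.Icc (0 : ℝ) b,
      |y x - z x| ≤ C * S ^ k * x ^ k / k.factorial := by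
    intro k
    induction k with
    | zero => intro x hx; simpa using hC x hx
    | succ k ih =>
      intro x hx
      have hx0 : (0 : ℝ) ≤ x := hx.1
      have hsub : Set.Icc (0 : ℝ) x ⊆ Set.Icc (0 : ℝ) b := Set.Icc_subset_Icc le_rfl hx.2
      have hdiff : y x - z x = ∫ t in (0 : ℝ)..x,
          (f t (fun i => y (q i * t)) - f t (fun i => z (q i * t))) := by
        rw [intervalIntegral.integral_sub (hInt y hyc x hx) (hInt z hzc x hx),
          hy x hx, hz x hx]
        ring
      set g : ℝ → ℝ := fun t =>
        f t (fun i => y (q i * t)) - f t (fun i => z (q i * t)) with hg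
      set B : ℝ → ℝ := fun t => C * S ^ (k + 1) / k.factorial * t ^ k with hBdef
      have hgint : IntervalIntegrable (fun t => |g t|) volume 0 x := by
        apply ContinuousOn.intervalIntegrable
        rw [Set.uIcc_of_le hx0]
        exact (((hcont y hyc).mono hsub).sub ((hcont z hzc).mono hsub)).abs
      have hBint : IntervalIntegrable B volume 0 x :=
        (continuous_const.mul (continuous_pow k)).intervalIntegrable 0 x
      have hptwise : ∀ t ∈ Set.Icc (0 : ℝ) x, |g t| ≤ B t := by
        intro t ht
        have htb : t ∈ Set.Icc (0 : ℝ) b := hsub ht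
        have h1 : |g t| ≤ ∑ i, L i * |y (q i * t) - z (q i * t)| := hLip t _ _
        have h2 : ∀ i, L i * |y (q i * t) - z (q i * t)| ≤
            L i * (C * S ^ k * t ^ k / k.factorial) := by
          intro i
          apply mul_le_mul_of_nonneg_left _ (hL i)
          calc |y (q i * t) - z (q i * t)|
              ≤ C * S ^ k * (q i * t) ^ k / k.factorial :=
                ih (q i * t) (hmaps i t htb)
            _ ≤ C * S ^ k * t ^ k / k.factorial := by
                apply div_le_div_of_nonneg_right _ (by positivity)
                apply mul_le_mul_of_nonneg_left _ (by positivity)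
                apply pow_le_pow_left₀ (mul_nonneg (hq' i).1.le ht.1)
                nlinarith [(hq' i).2, ht.1]
        calc |g t| ≤ ∑ i, L i * |y (q i * t) - z (q i * t)| := h1
          _ ≤ ∑ i, L i * (C * S ^ k * t ^ k / k.factorial) :=
              Finset.sum_le_sum fun i _ => h2 i
          _ = S * (C * S ^ k * t ^ k / k.factorial) := by
              rw [← Finset.sum_mul]
          _ = B t := by simp only [hBdef]; ring
      have hBval : (∫ t in (0 : ℝ)..x, B t) =
          C * S ^ (k + 1) * x ^ (k + 1) / (k + 1).factorial := by
        simp only [hBdef]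
        rw [intervalIntegral.integral_const_mul, integral_pow]
        rw [Nat.factorial_succ]
        push_cast
        have hkf : (k.factorial : ℝ) ≠ 0 := Nat.cast_ne_zero.2 k.factorial_ne_zero
        field_simp
        ring_nf
      calc |y x - z x| = |∫ t in (0 : ℝ)..x, g t| := by rw [hdiff]
        _ ≤ ∫ t in (0 : ℝ)..x, |g t| :=
            intervalIntegral.abs_integral_le_integral_abs hx0
        _ ≤ ∫ t in (0 : ℝ)..x, B t :=
            intervalIntegral.integral_mono_on hx0 hgint hBint hptwise
        _ = C * S ^ (k + 1) * x ^ (k + 1) / (k + 1).factorial := hBval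
  -- pass to the limit
  intro x hx
  have h1 : ∀ k : ℕ, |y x - z x| ≤ C * ((S * x) ^ k / k.factorial) := by
    intro k
    have := key k x hx
    calc |y x - z x| ≤ C * S ^ k * x ^ k / k.factorial := this
      _ = C * ((S * x) ^ k / k.factorial) := by rw [mul_pow]; ring
  have h2 : Filter.Tendsto (fun k : ℕ => C * ((S * x) ^ k / k.factorial))
      Filter.atTop (nhds 0) := by
    have := (FloorSemiring.tendsto_pow_div_factorial_atTop (S * x)).const_mul C
    simpa using this
  have h3 : |y x - z x| ≤ 0 := ge_of_tendsto' h2 h1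
  have := abs_nonneg (y x - z x)
  have : |y x - z x| = 0 := le_antisymm h3 this
  have := abs_eq_zero.1 this
  linarith
end

section
/- Let α > 0, n ∈ ℕ, a_0, ..., a_n ∈ ℝ, q_0 = 1 and 0 < q_i < 1 for i = 1, ..., n. Then for every real x ≥ 0, the series R_α(ā; q̄; x) = Σ_{m=0}^∞ (x^{αm} / Γ(αm + 1)) · ∏_{j=0}^{m−1} (Σ_{i=0}^n a_i q_i^{αj}) converges (absolutely); i.e., the fractional-order special function R_α is defined for all finite values of x ≥ 0. -/
/-- Auxiliary: for `α > 0` and `y ≥ 0`, the Mittag-Leffler type series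
`Σ y^m / Γ(αm+1)` converges. -/
lemma aux13 (α : ℝ) (hα : 0 < α) (y : ℝ) (hy : 0 ≤ y) :
    Summable (fun m : ℕ => y ^ m / Real.Gamma (α * m + 1)) := by
  set z : ℝ := max y 1 with hz
  have hz1 : (1 : ℝ) ≤ z := le_max_right _ _
  have hyz : y ≤ z := le_max_left _ _
  have hz0 : 0 < z := lt_of_lt_of_le one_pos hz1
  have h2z : (1 : ℝ) ≤ 2 * z := by nlinarith
  set r : ℝ := (2 * z) ^ (2 / α) with hr
  have hr0 : 0 ≤ r := Real.rpow_nonneg (by linarith) _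
  -- eventually k! ≥ r^k
  have hfac := FloorSemiring.tendsto_pow_div_factorial_atTop (K := ℝ) r
  have hfac' : ∀ᶠ k : ℕ in Filter.atTop, r ^ k ≤ (k.factorial : ℝ) := by
    filter_upwards [hfac.eventually (gt_mem_nhds one_pos)] with k hk
    have hkpos : (0 : ℝ) < (k.factorial : ℝ) := by positivity
    rw [div_lt_one hkpos] at hk
    exact hk.le
  obtain ⟨K, hK⟩ := Filter.eventually_atTop.mp hfac'
  -- eventually α * m is large
  have htend : Filter.Tendsto (fun m : ℕ => α * m) Filter.atTop Filter.atTop := by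
    exact (tendsto_natCast_atTop_atTop (R := ℝ)).const_mul_atTop hα
  have hbig : ∀ᶠ m : ℕ in Filter.atTop, max 2 (K : ℝ) ≤ α * m :=
    htend.eventually_ge_atTop _
  -- main eventual bound
  have hbound : ∀ᶠ m : ℕ in Filter.atTop,
      y ^ m / Real.Gamma (α * m + 1) ≤ (1 / 2 : ℝ) ^ m := by
    filter_upwards [hbig] with m hm
    have h2 : (2 : ℝ) ≤ α * m := le_trans (le_max_left _ _) hm
    have hKm : (K : ℝ) ≤ α * m := le_trans (le_max_right _ _) hm
    set k : ℕ := ⌊α * (m : ℝ)⌋₊ with hk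
    have hk2 : 2 ≤ k := Nat.le_floor h2
    have hkK : K ≤ k := Nat.le_floor hKm
    have hfloor_le : (k : ℝ) ≤ α * m := Nat.floor_le (by linarith)
    have hlt : α * m < k + 1 := Nat.lt_floor_add_one _
    -- Γ(αm+1) ≥ k!
    have hGamma_ge : (k.factorial : ℝ) ≤ Real.Gamma (α * m + 1) := by
      have := Real.Gamma_strictMonoOn_Ici.monotoneOn
        (a := (k : ℝ) + 1) (b := α * m + 1)
        (by simp only [Set.mem_Ici]
            have : (2 : ℝ) ≤ (k : ℝ) := by exact_mod_cast hk2
            linarith)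
        (by simp only [Set.mem_Ici]; linarith)
        (by linarith)
      rwa [Real.Gamma_nat_eq_factorial] at this
    -- k! ≥ r^k ≥ (2z)^m
    have hrk : r ^ k ≤ (k.factorial : ℝ) := hK k hkK
    have hpow : ((2 * z) : ℝ) ^ m ≤ r ^ k := by
      have h1 : r ^ k = (2 * z) ^ ((2 / α) * k) := by
        rw [hr, ← Real.rpow_natCast ((2 * z) ^ (2 / α)) k,
          ← Real.rpow_mul (by linarith)]
      have h2' : ((2 * z) : ℝ) ^ m = (2 * z) ^ ((m : ℝ)) := by
        rw [Real.rpow_natCast]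
      rw [h1, h2']
      apply Real.rpow_le_rpow_of_exponent_le h2z
      -- need m ≤ (2/α) * k, i.e. α m ≤ 2 k; have α m < k+1 and k ≥ 2 fails?
      -- from α m < k + 1 ≤ 2k (since k ≥ 1)
      have hk1 : (1 : ℝ) ≤ (k : ℝ) := by exact_mod_cast Nat.one_le_of_lt hk2
      rw [div_mul_eq_mul_div, le_div_iff₀ hα]
      nlinarith
    have hGamma_ge' : ((2 * z) : ℝ) ^ m ≤ Real.Gamma (α * m + 1) :=
      le_trans hpow (le_trans hrk hGamma_ge)
    have hGpos : (0 : ℝ) < Real.Gamma (α * m + 1) :=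
      Real.Gamma_pos_of_pos (by positivity)
    calc y ^ m / Real.Gamma (α * m + 1)
        ≤ z ^ m / (2 * z) ^ m := by
          apply div_le_div₀ (by positivity) (pow_le_pow_left₀ hy hyz m)
            (by positivity) hGamma_ge'
      _ = (1 / 2 : ℝ) ^ m := by
          rw [← div_pow]
          congr 1
          field_simp
  -- conclude via comparison with geometric series
  have hgeo : Summable (fun m : ℕ => (1 / 2 : ℝ) ^ m) :=
    summable_geometric_of_lt_one (by norm_num) (by norm_num)
  apply summable_of_isBigO_nat hgeo
  apply Asymptotics.IsBigO.of_bound 1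
  filter_upwards [hbound] with m hm
  have hGpos : (0 : ℝ) < Real.Gamma (α * m + 1) :=
    Real.Gamma_pos_of_pos (by positivity)
  have h0 : (0 : ℝ) ≤ y ^ m / Real.Gamma (α * m + 1) := by positivity
  simp only [Real.norm_eq_abs, one_mul, abs_of_nonneg h0,
    abs_of_nonneg (by positivity : (0:ℝ) ≤ (1/2:ℝ)^m)]
  exact hm

/-- The fractional series `R_α(ā; q̄; x) = Σ_{m=0}^∞ (x^{αm}/Γ(αm+1)) (ā; q̄)_{α,m}`
converges absolutely for every finite `x ≥ 0`. -/
theorem statement13 (α : ℝ) (hα : 0 < α) (n : ℕ) (a q : Fin (n + 1) → ℝ)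
    (hq0 : q 0 = 1) (hq : ∀ i : Fin (n + 1), i ≠ 0 → 0 < q i ∧ q i < 1)
    (x : ℝ) (hx : 0 ≤ x) :
    Summable (fun m : ℕ =>
      |x ^ (α * m) / Real.Gamma (α * m + 1) *
        ∏ j ∈ Finset.range m, ∑ i, a i * q i ^ (α * j)|) := by
  set C : ℝ := ∑ i, |a i| with hC
  have hC0 : 0 ≤ C := Finset.sum_nonneg fun i _ => abs_nonneg _
  have haux := aux13 α hα (x ^ α * C) (by positivity)
  apply Summable.of_nonneg_of_le (fun m => abs_nonneg _) _ haux
  intro m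
  have hGpos : (0 : ℝ) < Real.Gamma (α * m + 1) :=
    Real.Gamma_pos_of_pos (by positivity)
  have hxm : (0 : ℝ) ≤ x ^ (α * (m : ℝ)) := Real.rpow_nonneg hx _
  -- bound the product
  have hprod : |∏ j ∈ Finset.range m, ∑ i, a i * q i ^ (α * j)| ≤ C ^ m := by
    rw [Finset.abs_prod]
    calc ∏ j ∈ Finset.range m, |∑ i, a i * q i ^ (α * (j : ℝ))|
        ≤ ∏ j ∈ Finset.range m, C := by
          apply Finset.prod_le_prod (fun j _ => abs_nonneg _)
          intro j _
          calc |∑ i, a i * q i ^ (α * (j : ℝ))|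
              ≤ ∑ i, |a i * q i ^ (α * (j : ℝ))| := Finset.abs_sum_le_sum_abs _ _
            _ ≤ C := by
                apply Finset.sum_le_sum
                intro i _
                rw [abs_mul]
                by_cases hi : i = 0
                · subst hi
                  rw [hq0, Real.one_rpow]
                  simp
                · obtain ⟨hqi0, hqi1⟩ := hq i hi
                  have h1 : q i ^ (α * (j : ℝ)) ≤ 1 :=
                    Real.rpow_le_one hqi0.le hqi1.le (by positivity)
                  have h2 : |q i ^ (α * (j : ℝ))| = q i ^ (α * (j : ℝ)) :=
                    abs_of_nonneg (Real.rpow_nonneg hqi0.le _)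
                  rw [h2]
                  exact mul_le_of_le_one_right (abs_nonneg _) h1
      _ = C ^ m := by rw [Finset.prod_const, Finset.card_range]
  have hxpow : x ^ (α * (m : ℝ)) = (x ^ α) ^ m := by
    rw [mul_comm α (m : ℝ), Real.rpow_mul hx, ← Real.rpow_natCast (x ^ α) m,
      Real.rpow_natCast, ← Real.rpow_natCast x, ← Real.rpow_mul hx,
      mul_comm]
    norm_num
    rw [← Real.rpow_natCast ((x ^ α)) m, ← Real.rpow_mul hx, mul_comm]
  calc |x ^ (α * (m : ℝ)) / Real.Gamma (α * m + 1) *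
        ∏ j ∈ Finset.range m, ∑ i, a i * q i ^ (α * (j : ℝ))|
      = x ^ (α * (m : ℝ)) / Real.Gamma (α * m + 1) *
        |∏ j ∈ Finset.range m, ∑ i, a i * q i ^ (α * (j : ℝ))| := by
        rw [abs_mul, abs_of_nonneg (by positivity)]
    _ ≤ x ^ (α * (m : ℝ)) / Real.Gamma (α * m + 1) * C ^ m := by
        apply mul_le_mul_of_nonneg_left hprod (by positivity)
    _ = (x ^ α * C) ^ m / Real.Gamma (α * m + 1) := by
        rw [hxpow, mul_pow]; ring
end

section
/- Let 0 < α ≤ 1, n ∈ ℕ, a_0, ..., a_n ∈ ℝ, q_0 = 1 and 0 < q_i < 1 for i = 1, ..., n. Then the function y(x) = R_α(ā; q̄; x) = Σ_{m=0}^∞ (x^{αm} / Γ(αm + 1)) (ā; q̄)_{α,m} satisfies y(0) = 1 and the Volterra integral equation y(x) = 1 + (1/Γ(α)) ∫_0^x (x − t)^{α−1} (Σ_{i=0}^n a_i y(q_i t)) dt for all x ≥ 0; that is, R_α solves the fractional multiple proportional delay equation D^α y(x) = Σ_{i=0}^n a_i y(q_i x), y(0) = 1, in its equivalent integral form. -/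
open MeasureTheory Real Filter

lemma aux_gamma_interp {α x : ℝ} (hα : 0 < α) (hα1 : α ≤ 1) (hx : 0 < x) :
    Real.Gamma (x + 1) ≤ Real.Gamma (x + α) * (x + α) ^ (1 - α) := by
  have hxα : 0 < x + α := by linarith
  have h1 : (x + 1 : ℝ) = α • (x + α) + (1 - α) • (x + α + 1) := by
    simp only [smul_eq_mul]; ring
  have hc := Real.convexOn_log_Gamma.2 (Set.mem_Ioi.mpr hxα)
    (Set.mem_Ioi.mpr (by linarith : (0:ℝ) < x + α + 1)) (hα.le : (0:ℝ) ≤ α)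
    (by linarith : (0:ℝ) ≤ 1 - α) (by ring)
  rw [← h1] at hc
  have hΓpos : 0 < Real.Gamma (x + α) := Real.Gamma_pos_of_pos hxα
  have hΓ1 : Real.Gamma (x + α + 1) = (x + α) * Real.Gamma (x + α) :=
    Real.Gamma_add_one (ne_of_gt hxα)
  have hc' : Real.log (Real.Gamma (x + 1)) ≤
      Real.log (Real.Gamma (x + α)) + (1 - α) * Real.log (x + α) := by
    have := hc
    simp only [Function.comp_apply, smul_eq_mul] at this
    rw [hΓ1, Real.log_mul (ne_of_gt hxα) (ne_of_gt hΓpos)] at this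
    nlinarith [this]
  have hΓ1pos : 0 < Real.Gamma (x + 1) := Real.Gamma_pos_of_pos (by linarith)
  calc Real.Gamma (x + 1) = Real.exp (Real.log (Real.Gamma (x + 1))) :=
        (Real.exp_log hΓ1pos).symm
    _ ≤ Real.exp (Real.log (Real.Gamma (x + α)) + (1 - α) * Real.log (x + α)) :=
        Real.exp_le_exp.mpr hc'
    _ = Real.Gamma (x + α) * (x + α) ^ (1 - α) := by
        rw [Real.exp_add, Real.exp_log hΓpos, Real.rpow_def_of_pos hxα, mul_comm (1 - α)]

lemma aux_gamma_ratio {α x : ℝ} (hα : 0 < α) (hα1 : α ≤ 1) (hx : 1 ≤ x) :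
    Real.Gamma x * (x ^ α / 2) ≤ Real.Gamma (x + α) := by
  have hx0 : 0 < x := by linarith
  have h1 := aux_gamma_interp hα hα1 hx0
  have hxα : 0 < x + α := by linarith
  have h2 : (x + α) ^ (1 - α) ≤ 2 * x ^ (1 - α) := by
    calc (x + α) ^ (1 - α) ≤ (2 * x) ^ (1 - α) := by
          apply Real.rpow_le_rpow hxα.le (by linarith) (by linarith)
      _ = 2 ^ (1 - α) * x ^ (1 - α) := Real.mul_rpow (by norm_num) hx0.le
      _ ≤ 2 * x ^ (1 - α) := by
          have : (2:ℝ) ^ (1 - α) ≤ 2 ^ (1:ℝ) :=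
            Real.rpow_le_rpow_of_exponent_le (by norm_num) (by linarith)
          simp only [Real.rpow_one] at this
          nlinarith [Real.rpow_nonneg hx0.le (1 - α)]
  have hΓx : 0 < Real.Gamma x := Real.Gamma_pos_of_pos hx0
  have hΓxα : 0 < Real.Gamma (x + α) := Real.Gamma_pos_of_pos hxα
  have h3 : Real.Gamma (x + 1) = x * Real.Gamma x := Real.Gamma_add_one (ne_of_gt hx0)
  -- from h1 : x * Γ x ≤ Γ(x+α) * (x+α)^(1-α) ≤ Γ(x+α) * 2 * x^(1-α)
  have h4 : x * Real.Gamma x ≤ Real.Gamma (x + α) * (2 * x ^ (1 - α)) := by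
    rw [h3] at h1
    nlinarith [Real.rpow_nonneg hxα.le (1 - α)]
  -- x = x^α * x^(1-α)
  have h5 : x = x ^ α * x ^ (1 - α) := by
    rw [← Real.rpow_add hx0]; norm_num
  have hx1α : 0 < x ^ (1 - α) := Real.rpow_pos_of_pos hx0 _
  have hxa : 0 < x ^ α := Real.rpow_pos_of_pos hx0 _
  nlinarith [h4, mul_pos hΓx hxa]

lemma aux_ml_summable {α : ℝ} (hα : 0 < α) (hα1 : α ≤ 1) (z : ℝ) :
    Summable (fun m : ℕ => z ^ m / Real.Gamma (α * m + 1)) := by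
  apply summable_of_ratio_norm_eventually_le (r := 1/2) (by norm_num)
  have htend : Tendsto (fun m : ℕ => (α * m + 1) ^ α) atTop atTop := by
    apply (tendsto_rpow_atTop hα).comp
    apply tendsto_atTop_add_const_right
    exact (tendsto_natCast_atTop_atTop (R := ℝ)).const_mul_atTop hα
  filter_upwards [htend.eventually_ge_atTop (4 * (|z| + 1))] with m hm
  set x := α * (m : ℝ) + 1 with hxdef
  have hx1 : 1 ≤ x := by
    have : (0:ℝ) ≤ α * m := by positivity
    linarith
  have key := aux_gamma_ratio hα hα1 hx1
  have hΓx : 0 < Real.Gamma x := Real.Gamma_pos_of_pos (by linarith)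
  have hΓxα : 0 < Real.Gamma (x + α) := Real.Gamma_pos_of_pos (by linarith)
  have hΓeq : Real.Gamma (α * ((m + 1 : ℕ) : ℝ) + 1) = Real.Gamma (x + α) := by
    congr 1; push_cast; ring
  rw [hΓeq, norm_div, norm_div, norm_pow, norm_pow, Real.norm_eq_abs,
    Real.norm_eq_abs, Real.norm_eq_abs, abs_of_pos hΓx, abs_of_pos hΓxα]
  rw [div_le_iff₀ hΓxα, mul_comm (1/2 : ℝ), mul_assoc, div_mul_eq_mul_div, div_mul_eq_mul_div,
    le_div_iff₀ hΓx]
  have hz : 4 * |z| ≤ x ^ α := by nlinarith [abs_nonneg z]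
  have hA : (0:ℝ) ≤ |z| ^ m := pow_nonneg (abs_nonneg z) m
  have hzz : |z| ^ (m + 1) = |z| * |z| ^ m := by ring
  rw [hzz]
  nlinarith [mul_le_mul_of_nonneg_left key hA, mul_nonneg hA hΓx.le,
    mul_le_mul_of_nonneg_right hz (mul_nonneg hA hΓx.le)]

lemma aux_beta {s t : ℝ} (hs : 0 < s) (ht : 0 < t) :
    ∫ u in (0:ℝ)..1, u ^ (s - 1) * (1 - u) ^ (t - 1)
      = Real.Gamma s * Real.Gamma t / Real.Gamma (s + t) := by
  have h1 : Complex.betaIntegral s t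
      = ((∫ u in (0:ℝ)..1, u ^ (s - 1) * (1 - u) ^ (t - 1) : ℝ) : ℂ) := by
    rw [Complex.betaIntegral, ← intervalIntegral.integral_ofReal]
    refine intervalIntegral.integral_congr fun u hu => ?_
    rw [Set.uIcc_of_le (by norm_num : (0:ℝ) ≤ 1)] at hu
    rw [Complex.ofReal_mul, Complex.ofReal_cpow hu.1,
      Complex.ofReal_cpow (by linarith [hu.2] : (0:ℝ) ≤ 1 - u)]
    push_cast
    ring
  have h2 := Complex.Gamma_mul_Gamma_eq_betaIntegral
    (s := (s : ℂ)) (t := (t : ℂ)) (by simpa using hs) (by simpa using ht)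
  rw [h1] at h2
  rw [show ((s:ℂ) + (t:ℂ)) = (((s + t : ℝ)):ℂ) by push_cast; ring, Complex.Gamma_ofReal,
    Complex.Gamma_ofReal, Complex.Gamma_ofReal] at h2
  have h4 : Real.Gamma s * Real.Gamma t
      = Real.Gamma (s + t) * ∫ u in (0:ℝ)..1, u ^ (s - 1) * (1 - u) ^ (t - 1) := by
    exact_mod_cast h2
  have hΓ : 0 < Real.Gamma (s + t) := Real.Gamma_pos_of_pos (by linarith)
  field_simp [ne_of_gt hΓ]
  linarith [h4]

lemma aux_beta_scaled {s t x : ℝ} (hs : 0 < s) (ht : 0 < t) (hx : 0 < x) :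
    ∫ u in (0:ℝ)..x, (x - u) ^ (s - 1) * u ^ (t - 1)
      = x ^ (s + t - 1) * (Real.Gamma s * Real.Gamma t / Real.Gamma (s + t)) := by
  have hc : (x:ℝ) ≠ 0 := ne_of_gt hx
  have h0 := intervalIntegral.integral_comp_mul_left
    (fun u => (x - u) ^ (s - 1) * u ^ (t - 1)) (a := 0) (b := 1) hc
  simp only [mul_zero, mul_one] at h0
  -- h0 : ∫ v in 0..1, (x - x*v)^(s-1) * (x*v)^(t-1) = x⁻¹ • ∫ u in 0..x, ...
  have h1 : ∫ v in (0:ℝ)..1, (x - x * v) ^ (s - 1) * (x * v) ^ (t - 1)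
      = x ^ (s - 1) * x ^ (t - 1) * ∫ v in (0:ℝ)..1, v ^ (t - 1) * (1 - v) ^ (s - 1) := by
    rw [← intervalIntegral.integral_const_mul]
    refine intervalIntegral.integral_congr fun v hv => ?_
    rw [Set.uIcc_of_le (by norm_num : (0:ℝ) ≤ 1)] at hv
    have hxv : x - x * v = x * (1 - v) := by ring
    rw [hxv, Real.mul_rpow hx.le (by linarith [hv.2]), Real.mul_rpow hx.le hv.1]
    ring
  rw [h1, aux_beta ht hs] at h0
  rw [smul_eq_mul, inv_mul_eq_div, eq_div_iff hc] at h0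
  have h2 : (∫ u in (0:ℝ)..x, (x - u) ^ (s - 1) * u ^ (t - 1))
      = x * (x ^ (s - 1) * x ^ (t - 1) * (Real.Gamma t * Real.Gamma s / Real.Gamma (t + s))) := by
    linarith [h0]
  rw [h2, add_comm t s, show s + t - 1 = (s - 1) + (t - 1) + 1 by ring,
    Real.rpow_add_one hc, Real.rpow_add hx]
  ring

theorem aux_main (α : ℝ) (hα : 0 < α) (hα1 : α ≤ 1) {ι : Type*} [Fintype ι]
    (a q : ι → ℝ) (hq : ∀ i, 0 < q i ∧ q i ≤ 1)
    (S : ℕ → ℝ) (hSdef : ∀ j : ℕ, S j = ∑ i, a i * q i ^ (α * j))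
    (P : ℕ → ℝ) (hPdef : ∀ m : ℕ, P m = ∏ j ∈ Finset.range m, S j)
    (R : ℝ → ℝ)
    (hRdef : ∀ x : ℝ, R x = ∑' m : ℕ, x ^ (α * m) / Real.Gamma (α * m + 1) * P m) :
    R 0 = 1 ∧ ∀ x : ℝ, 0 ≤ x →
      R x = 1 + (1 / Real.Gamma α) *
        ∫ t in (0 : ℝ)..x, (x - t) ^ (α - 1) * ∑ i, a i * R (q i * t) := by
  classical
  set C : ℝ := ∑ i, |a i| with hC
  have hC0 : 0 ≤ C := Finset.sum_nonneg fun i _ => abs_nonneg _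
  have hG : ∀ m : ℕ, 0 < Real.Gamma (α * m + 1) :=
    fun m => Real.Gamma_pos_of_pos (by positivity)
  have hΓα : 0 < Real.Gamma α := Real.Gamma_pos_of_pos hα
  have hSb : ∀ j : ℕ, |S j| ≤ C := by
    intro j
    rw [hSdef j]
    refine (Finset.abs_sum_le_sum_abs _ _).trans (Finset.sum_le_sum fun i _ => ?_)
    rw [abs_mul]
    have h1 : |q i ^ (α * (j:ℝ))| ≤ 1 := by
      rw [abs_of_nonneg (Real.rpow_nonneg (hq i).1.le _)]
      exact Real.rpow_le_one (hq i).1.le (hq i).2 (by positivity)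
    nlinarith [abs_nonneg (a i)]
  have hPb : ∀ m : ℕ, |P m| ≤ C ^ m := by
    intro m
    rw [hPdef m, Finset.abs_prod]
    calc ∏ j ∈ Finset.range m, |S j| ≤ ∏ _j ∈ Finset.range m, C :=
          Finset.prod_le_prod (fun j _ => abs_nonneg _) (fun j _ => hSb j)
      _ = C ^ m := by rw [Finset.prod_const, Finset.card_range]
  have hrpow : ∀ r : ℝ, 0 ≤ r → ∀ m : ℕ, r ^ (α * (m:ℝ)) = (r ^ α) ^ m := by
    intro r hr m
    rw [Real.rpow_mul hr, Real.rpow_natCast]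
  have hsum : ∀ r : ℝ, 0 ≤ r →
      Summable (fun m : ℕ => r ^ (α * (m:ℝ)) / Real.Gamma (α * m + 1) * P m) := by
    intro r hr
    refine Summable.of_norm_bounded (aux_ml_summable hα hα1 (r ^ α * C)) fun m => ?_
    rw [Real.norm_eq_abs, abs_mul, abs_div, abs_of_nonneg (Real.rpow_nonneg hr _),
      abs_of_pos (hG m), hrpow r hr m, mul_pow, div_mul_eq_mul_div]
    gcongr
    exact hPb m
  have hR0 : R 0 = 1 := by
    rw [hRdef 0, tsum_eq_single 0]
    · norm_num [hPdef, Real.Gamma_one]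
    · intro m hm
      have hm' : (0:ℝ) < m := by exact_mod_cast Nat.pos_of_ne_zero hm
      rw [Real.zero_rpow (ne_of_gt (mul_pos hα hm'))]
      simp
  refine ⟨hR0, fun x hx => ?_⟩
  rcases hx.eq_or_lt with h | hxpos
  · rw [← h]
    simp [hR0]
  -- main case 0 < x
  have hA : ∀ t : ℝ, 0 ≤ t → (∑ i, a i * R (q i * t))
      = ∑' m : ℕ, t ^ (α * (m:ℝ)) / Real.Gamma (α * m + 1) * (P m * S m) := by
    intro t ht
    have hsummi : ∀ i : ι, Summable (fun m : ℕ =>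
        a i * ((q i * t) ^ (α * (m:ℝ)) / Real.Gamma (α * m + 1) * P m)) :=
      fun i => (hsum _ (mul_nonneg (hq i).1.le ht)).mul_left _
    calc ∑ i, a i * R (q i * t)
        = ∑ i, ∑' m : ℕ, a i * ((q i * t) ^ (α * (m:ℝ)) / Real.Gamma (α * m + 1) * P m) := by
          refine Finset.sum_congr rfl fun i _ => ?_
          rw [hRdef (q i * t), ← tsum_mul_left]
      _ = ∑' m : ℕ, ∑ i, a i * ((q i * t) ^ (α * (m:ℝ)) / Real.Gamma (α * m + 1) * P m) :=
          (Summable.tsum_finsetSum fun i _ => hsummi i).symm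
      _ = ∑' m : ℕ, t ^ (α * (m:ℝ)) / Real.Gamma (α * m + 1) * (P m * S m) := by
          refine tsum_congr fun m => ?_
          have h1 : ∀ i : ι, a i * ((q i * t) ^ (α * (m:ℝ)) / Real.Gamma (α * m + 1) * P m)
              = t ^ (α * (m:ℝ)) / Real.Gamma (α * m + 1) * (P m * (a i * q i ^ (α * (m:ℝ)))) := by
            intro i
            rw [Real.mul_rpow (hq i).1.le ht]
            ring
          rw [Finset.sum_congr rfl fun i _ => h1 i, ← Finset.mul_sum, ← Finset.mul_sum, ← hSdef m]
  set f : ℕ → ℝ → ℝ := fun m t =>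
    (x - t) ^ (α - 1) * t ^ (α * (m:ℝ)) * (P m * S m / Real.Gamma (α * m + 1)) with hfdef
  have hmeas : ∀ m : ℕ, AEStronglyMeasurable (f m) (volume.restrict (Set.Ioc 0 x)) := by
    intro m
    apply Measurable.aestronglyMeasurable
    fun_prop
  have hbint : ∀ c : ℝ, 0 ≤ c →
      IntervalIntegrable (fun t => (x - t) ^ (α - 1) * t ^ c) volume 0 x := by
    intro c hc
    have h1 : IntervalIntegrable (fun t : ℝ => t ^ (α - 1)) volume 0 x :=
      intervalIntegral.intervalIntegrable_rpow' (by linarith)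
    have h2 := (h1.comp_sub_left x).symm
    rw [sub_self, sub_zero] at h2
    refine h2.mul_continuousOn (Continuous.continuousOn ?_)
    exact continuous_iff_continuousAt.mpr fun t => Real.continuousAt_rpow_const t c (Or.inr hc)
  have hfint : ∀ m : ℕ, IntegrableOn (f m) (Set.Ioc 0 x) volume := by
    intro m
    exact ((hbint (α * m) (by positivity)).1).mul_const _
  have hbeta : ∀ m : ℕ, (∫ t in (0:ℝ)..x, (x - t) ^ (α - 1) * t ^ (α * (m:ℝ)))
      = x ^ (α * (m:ℝ) + α) *
        (Real.Gamma α * Real.Gamma (α * (m:ℝ) + 1) / Real.Gamma (α * (m:ℝ) + α + 1)) := by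
    intro m
    have h := aux_beta_scaled (s := α) (t := α * (m:ℝ) + 1) hα (by positivity) hxpos
    rw [show α * (m:ℝ) + 1 - 1 = α * (m:ℝ) by ring,
      show α + (α * (m:ℝ) + 1) - 1 = α * (m:ℝ) + α by ring,
      show α + (α * (m:ℝ) + 1) = α * (m:ℝ) + α + 1 by ring] at h
    exact h
  have habs : ∀ m : ℕ, (∫ t in Set.Ioc 0 x, |f m t| ∂volume)
      = (x ^ (α * (m:ℝ) + α) *
          (Real.Gamma α * Real.Gamma (α * (m:ℝ) + 1) / Real.Gamma (α * (m:ℝ) + α + 1)))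
        * |P m * S m / Real.Gamma (α * m + 1)| := by
    intro m
    have h1 : ∀ t ∈ Set.Ioc (0:ℝ) x, |f m t|
        = (x - t) ^ (α - 1) * t ^ (α * (m:ℝ)) * |P m * S m / Real.Gamma (α * m + 1)| := by
      intro t ht
      rw [hfdef]
      simp only []
      rw [abs_mul, abs_mul,
        abs_of_nonneg (Real.rpow_nonneg (by linarith [ht.2] : (0:ℝ) ≤ x - t) _),
        abs_of_nonneg (Real.rpow_nonneg ht.1.le _)]
    rw [setIntegral_congr_fun measurableSet_Ioc h1, integral_mul_const,
      ← intervalIntegral.integral_of_le hxpos.le, hbeta m]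
  have hnorm : ∀ m : ℕ, (∫⁻ t in Set.Ioc 0 x, ‖f m t‖₊ ∂volume)
      = ENNReal.ofReal ((x ^ (α * (m:ℝ) + α) *
          (Real.Gamma α * Real.Gamma (α * (m:ℝ) + 1) / Real.Gamma (α * (m:ℝ) + α + 1)))
        * |P m * S m / Real.Gamma (α * m + 1)|) := by
    intro m
    rw [← habs m, ofReal_integral_eq_lintegral_ofReal (hfint m).abs
      (Filter.Eventually.of_forall fun t => abs_nonneg _)]
    exact lintegral_congr fun t => (Real.enorm_eq_ofReal_abs _)
  have hxe : ∀ m : ℕ, x ^ (α * (m:ℝ) + α) = (x ^ α) ^ (m + 1) := by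
    intro m
    rw [show α * (m:ℝ) + α = α * ((m:ℝ) + 1) by ring,
      show (m:ℝ) + 1 = ((m + 1 : ℕ) : ℝ) by push_cast; ring, Real.rpow_mul hxpos.le,
      Real.rpow_natCast]
  have hPS : ∀ m : ℕ, |P m * S m| ≤ C ^ (m + 1) := by
    intro m
    rw [abs_mul, pow_succ]
    exact mul_le_mul (hPb m) (hSb m) (abs_nonneg _) (pow_nonneg hC0 m)
  have hcsum : Summable (fun m : ℕ => (x ^ (α * (m:ℝ) + α) *
      (Real.Gamma α * Real.Gamma (α * (m:ℝ) + 1) / Real.Gamma (α * (m:ℝ) + α + 1)))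
        * |P m * S m / Real.Gamma (α * m + 1)|) := by
    have hs1 : Summable (fun m : ℕ =>
        Real.Gamma α * ((x ^ α * C) ^ (m + 1) / Real.Gamma (α * ((m + 1 : ℕ) : ℝ) + 1))) := by
      have h0 := aux_ml_summable hα hα1 (x ^ α * C)
      exact ((summable_nat_add_iff 1).mpr h0).mul_left _
    refine Summable.of_nonneg_of_le (fun m => ?_) (fun m => ?_) hs1
    · have := hG m
      have h2 : 0 < Real.Gamma (α * (m:ℝ) + α + 1) := Real.Gamma_pos_of_pos (by positivity)
      have h3 : 0 ≤ x ^ (α * (m:ℝ) + α) := Real.rpow_nonneg hxpos.le _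
      positivity
    · have h2 : 0 < Real.Gamma (α * (m:ℝ) + α + 1) := Real.Gamma_pos_of_pos (by positivity)
      have hcast : α * ((m + 1 : ℕ) : ℝ) + 1 = α * (m:ℝ) + α + 1 := by push_cast; ring
      rw [abs_div, abs_of_pos (hG m), hxe m, hcast]
      have h1 : (x ^ α) ^ (m + 1) *
          (Real.Gamma α * Real.Gamma (α * (m:ℝ) + 1) / Real.Gamma (α * (m:ℝ) + α + 1))
            * (|P m * S m| / Real.Gamma (α * (m:ℝ) + 1))
          = Real.Gamma α * ((x ^ α) ^ (m + 1) * |P m * S m| / Real.Gamma (α * (m:ℝ) + α + 1)) := by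
        field_simp
      rw [h1, mul_pow]
      gcongr
      exact hPS m
  have hbound : (∑' m : ℕ, ∫⁻ t in Set.Ioc 0 x, ‖f m t‖₊ ∂volume) ≠ ⊤ := by
    rw [tsum_congr hnorm, ← ENNReal.ofReal_tsum_of_nonneg (fun m => ?_) hcsum]
    · exact ENNReal.ofReal_ne_top
    · have h2 : 0 < Real.Gamma (α * (m:ℝ) + α + 1) := Real.Gamma_pos_of_pos (by positivity)
      have h3 : 0 ≤ x ^ (α * (m:ℝ) + α) := Real.rpow_nonneg hxpos.le _
      have := hG m
      positivity
  have hswap : (∫ t in Set.Ioc 0 x, (∑' m : ℕ, f m t) ∂volume)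
      = ∑' m : ℕ, ∫ t in Set.Ioc 0 x, f m t ∂volume := integral_tsum hmeas hbound
  -- compute each integral
  have hint_m : ∀ m : ℕ, (∫ t in Set.Ioc 0 x, f m t ∂volume)
      = (x ^ (α * (m:ℝ) + α) *
          (Real.Gamma α * Real.Gamma (α * (m:ℝ) + 1) / Real.Gamma (α * (m:ℝ) + α + 1)))
        * (P m * S m / Real.Gamma (α * m + 1)) := by
    intro m
    rw [hfdef]
    simp only []
    rw [integral_mul_const, ← intervalIntegral.integral_of_le hxpos.le, hbeta m]
  -- integrand identity
  have hptwise : ∀ t ∈ Set.Ioc (0:ℝ) x,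
      (x - t) ^ (α - 1) * ∑ i, a i * R (q i * t) = ∑' m : ℕ, f m t := by
    intro t ht
    rw [hA t ht.1.le, ← tsum_mul_left]
    refine tsum_congr fun m => ?_
    rw [hfdef]
    ring
  -- series identity for the result
  have hser : ∀ m : ℕ, (1 / Real.Gamma α) * ((x ^ (α * (m:ℝ) + α) *
        (Real.Gamma α * Real.Gamma (α * (m:ℝ) + 1) / Real.Gamma (α * (m:ℝ) + α + 1)))
      * (P m * S m / Real.Gamma (α * m + 1)))
      = x ^ (α * ((m + 1 : ℕ) : ℝ)) / Real.Gamma (α * ((m + 1 : ℕ) : ℝ) + 1) * P (m + 1) := by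
    intro m
    have h2 : 0 < Real.Gamma (α * (m:ℝ) + α + 1) := Real.Gamma_pos_of_pos (by positivity)
    have hcast : α * ((m + 1 : ℕ) : ℝ) = α * (m:ℝ) + α := by push_cast; ring
    rw [hcast, hPdef (m + 1), Finset.prod_range_succ, ← hPdef m]
    field_simp
  -- put everything together
  rw [hRdef x, Summable.tsum_eq_zero_add (hsum x hx)]
  have hT0 : x ^ (α * ((0:ℕ):ℝ)) / Real.Gamma (α * ((0:ℕ):ℝ) + 1) * P 0 = 1 := by
    norm_num [hPdef, Real.Gamma_one]
  rw [hT0]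
  congr 1
  rw [intervalIntegral.integral_of_le hxpos.le,
    setIntegral_congr_fun measurableSet_Ioc hptwise, hswap, tsum_congr hint_m, ← tsum_mul_left,
    tsum_congr hser]


/-- For `0 < α ≤ 1`, the function `y = R_α(ā; q̄; ·)` satisfies `y(0) = 1` and the
Volterra integral equation
`y(x) = 1 + (1/Γ(α)) ∫_0^x (x - t)^{α-1} (Σ_{i=0}^n a_i y(q_i t)) dt` for all `x ≥ 0`,
i.e. it solves `D^α y(x) = Σ_{i=0}^n a_i y(q_i x)`, `y(0) = 1`, in integral form. -/
theorem statement15 (α : ℝ) (hα : 0 < α) (hα1 : α ≤ 1) (n : ℕ)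
    (a q : Fin (n + 1) → ℝ)
    (hq0 : q 0 = 1) (hq : ∀ i : Fin (n + 1), i ≠ 0 → 0 < q i ∧ q i < 1)
    (R : ℝ → ℝ)
    (hR : ∀ x : ℝ, R x = ∑' m : ℕ,
      x ^ (α * m) / Real.Gamma (α * m + 1) *
        ∏ j ∈ Finset.range m, ∑ i, a i * q i ^ (α * j)) :
    R 0 = 1 ∧
      ∀ x : ℝ, 0 ≤ x →
        R x = 1 + (1 / Real.Gamma α) *
          ∫ t in (0 : ℝ)..x, (x - t) ^ (α - 1) * ∑ i, a i * R (q i * t) := by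
  have hq' : ∀ i : Fin (n + 1), 0 < q i ∧ q i ≤ 1 := by
    intro i
    by_cases h : i = 0
    · subst h; rw [hq0]; exact ⟨one_pos, le_refl 1⟩
    · exact ⟨(hq i h).1, (hq i h).2.le⟩
  exact aux_main α hα hα1 a q hq'
    (fun j => ∑ i, a i * q i ^ (α * j)) (fun j => rfl)
    (fun m => ∏ j ∈ Finset.range m, ∑ i, a i * q i ^ (α * j)) (fun m => rfl)
    R hR
end

section
/- Let n ∈ ℕ, a_0, ..., a_n ∈ ℝ, q_0 = 1 and 0 < q_i < 1 for i = 1, ..., n. Define the successive approximations to the equation y′(x) = Σ_{i=0}^n a_i y(q_i x), y(0) = 1, by y_0(x) = 1 and y_{m+1}(x) = ∫_0^x Σ_{i=0}^n a_i y_m(q_i t) dt. Then for every m ≥ 1 and all real x, y_m(x) = (x^m / m!) · ∏_{j=0}^{m−1} (Σ_{i=0}^n a_i q_i^j). -/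
open MeasureTheory

/-- The successive approximations `y_0(x) = 1`,
`y_{m+1}(x) = ∫_0^x Σ_{i=0}^n a_i y_m(q_i t) dt` for the multiple proportional delay
equation `y'(x) = Σ_{i=0}^n a_i y(q_i x)`, `y(0) = 1`, are given in closed form by
`y_m(x) = (x^m/m!) ∏_{j=0}^{m-1} (Σ_{i=0}^n a_i q_i^j)` for every `m ≥ 1` and real `x`. -/
theorem statement17 (n : ℕ) (a q : Fin (n + 1) → ℝ)
    (hq0 : q 0 = 1) (hq : ∀ i : Fin (n + 1), i ≠ 0 → 0 < q i ∧ q i < 1)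
    (y : ℕ → ℝ → ℝ) (hy0 : ∀ x : ℝ, y 0 x = 1)
    (hyrec : ∀ (m : ℕ) (x : ℝ),
      y (m + 1) x = ∫ t in (0 : ℝ)..x, ∑ i, a i * y m (q i * t))
    (m : ℕ) (hm : 1 ≤ m) (x : ℝ) :
    y m x = x ^ m / (Nat.factorial m : ℝ) *
      ∏ j ∈ Finset.range m, ∑ i, a i * q i ^ j := by
  clear hm
  induction m generalizing x with
  | zero => simp [hy0]
  | succ m ih =>
    rw [hyrec]
    have h1 : ∀ t : ℝ, (∑ i, a i * y m (q i * t)) =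
        ((∑ i, a i * q i ^ m) / (Nat.factorial m : ℝ) *
          ∏ j ∈ Finset.range m, ∑ i, a i * q i ^ j) * t ^ m := by
      intro t
      have h2 : ∀ i : Fin (n + 1), a i * y m (q i * t) =
          (a i * q i ^ m) * (t ^ m / (Nat.factorial m : ℝ) *
            ∏ j ∈ Finset.range m, ∑ i, a i * q i ^ j) := by
        intro i
        rw [ih, mul_pow]
        ring
      rw [Finset.sum_congr rfl fun i _ => h2 i, ← Finset.sum_mul]
      ring
    simp_rw [h1]
    rw [intervalIntegral.integral_const_mul, integral_pow, Finset.prod_range_succ,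
      Nat.factorial_succ]
    have hf : (Nat.factorial m : ℝ) ≠ 0 := Nat.cast_ne_zero.mpr (Nat.factorial_ne_zero m)
    have hm1 : ((m : ℝ) + 1) ≠ 0 := by positivity
    push_cast
    field_simp
    ring
end
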